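/- With D_{γ₀} = max(‖x₁ − x*‖, γ₀), the warm-up Free AdaGrad iterates satisfy Σ_{t=1}^T (f(x_t) − f(x*)) ≤ 10 · D_{γ₀} · L · √T · √( 2 · log₂(2·D_{γ₀}/γ₀) ). -/

import Mathlib

set_option maxHeartbeats 1000000

open scoped RealInnerProductSpace
open Finset

private lemma wfa_sqrt_add_le (a b : ℝ) (ha : 0 ≤ a) (hb : 0 ≤ b) :
    Real.sqrt (a + b) ≤ Real.sqrt a + Real.sqrt b := by
  have h : a + b ≤ (Real.sqrt a + Real.sqrt b) ^ 2 := by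
    nlinarith [Real.sq_sqrt ha, Real.sq_sqrt hb, Real.sqrt_nonneg a, Real.sqrt_nonneg b,
      mul_nonneg (Real.sqrt_nonneg a) (Real.sqrt_nonneg b)]
  calc Real.sqrt (a + b) ≤ Real.sqrt ((Real.sqrt a + Real.sqrt b) ^ 2) := Real.sqrt_le_sqrt h
    _ = Real.sqrt a + Real.sqrt b := Real.sqrt_sq (by positivity)

private lemma wfa_sum_inv_sqrt (n : ℕ) :
    ∑ j ∈ Icc 1 n, (1 : ℝ) / Real.sqrt j ≤ 2 * Real.sqrt n := by
  induction n with
  | zero => simp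
  | succ m ih =>
    rcases Nat.eq_or_lt_of_le (Nat.zero_le m) with h0 | h0
    · simp [← h0]
    rw [Finset.sum_Icc_succ_top (by omega : 1 ≤ m + 1)]
    have hm : (0:ℝ) ≤ (m : ℝ) := Nat.cast_nonneg m
    have hm1 : (0:ℝ) < ((m:ℝ) + 1) := by positivity
    have hs : Real.sqrt ((m:ℝ)+1) > 0 := Real.sqrt_pos.2 hm1
    have key : (1 : ℝ) / Real.sqrt ((m:ℕ)+1 : ℕ) ≤ 2 * Real.sqrt ((m:ℕ)+1:ℕ) - 2 * Real.sqrt m := by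
      have hcast : (((m:ℕ)+1 : ℕ) : ℝ) = (m:ℝ) + 1 := by push_cast; ring
      rw [hcast]
      have h1 : Real.sqrt m * Real.sqrt m = m := Real.mul_self_sqrt hm
      have h2 : Real.sqrt ((m:ℝ)+1) * Real.sqrt ((m:ℝ)+1) = (m:ℝ)+1 := Real.mul_self_sqrt (le_of_lt hm1)
      have h3 : Real.sqrt m ≤ Real.sqrt ((m:ℝ)+1) := Real.sqrt_le_sqrt (by linarith)
      rw [div_le_iff₀ hs]
      nlinarith [Real.sqrt_nonneg (m:ℝ)]
    have : (((m:ℕ)+1:ℕ):ℝ) = (m:ℝ)+1 := by push_cast; ring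
    calc ∑ j ∈ Icc 1 m, (1:ℝ)/Real.sqrt j + 1/Real.sqrt ((m:ℕ)+1:ℕ)
        ≤ 2 * Real.sqrt m + (2 * Real.sqrt ((m:ℕ)+1:ℕ) - 2 * Real.sqrt m) := by
          exact add_le_add ih key
      _ = 2 * Real.sqrt ((m:ℕ)+1:ℕ) := by ring

private lemma wfa_sum_quarter (S : Finset ℕ) : ∑ m ∈ S, (1/4 : ℝ) ^ m ≤ 4/3 := by
  classical
  rcases S.eq_empty_or_nonempty with rfl | hS
  · norm_num
  obtain ⟨N, hN⟩ := S.exists_le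
  have hsub : S ⊆ Finset.range (N+1) := fun m hm => Finset.mem_range.2 (Nat.lt_succ_of_le (hN m hm))
  calc ∑ m ∈ S, (1/4:ℝ)^m ≤ ∑ m ∈ Finset.range (N+1), (1/4:ℝ)^m :=
        Finset.sum_le_sum_of_subset_of_nonneg hsub (fun i _ _ => by positivity)
    _ = (1 - (1/4:ℝ)^(N+1)) / (1 - 1/4) := by
        rw [geom_sum_eq (by norm_num : (1/4:ℝ) ≠ 1)]
        rw [div_eq_div_iff (by norm_num) (by norm_num)]
        ring
    _ ≤ 4/3 := by
        have : (0:ℝ) ≤ (1/4:ℝ)^(N+1) := by positivity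
        rw [div_le_iff₀ (by norm_num : (0:ℝ) < 1 - 1/4)]
        linarith

private lemma wfa_sum_two_pow (n : ℕ) : ∑ j ∈ Icc 1 n, (2:ℝ)^j ≤ 2^(n+1) := by
  have hsub : Icc 1 n ⊆ Finset.range (n+1) := by
    intro j hj; rw [Finset.mem_range]; exact Nat.lt_succ_of_le (Finset.mem_Icc.1 hj).2
  calc ∑ j ∈ Icc 1 n, (2:ℝ)^j ≤ ∑ j ∈ Finset.range (n+1), (2:ℝ)^j :=
        Finset.sum_le_sum_of_subset_of_nonneg hsub (fun i _ _ => by positivity)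
    _ = 2^(n+1) - 1 := by
        rw [geom_sum_eq (by norm_num : (2:ℝ) ≠ 1)]; ring
    _ ≤ 2^(n+1) := by linarith

private lemma wfa_var_aux {s c N : ℝ} (hs0 : 0 < s) (hcon : 0 < c)
    (hsX : s * (N + 1) ≤ c) (hsq : 2*s*c ≤ s^2*N) (hN : 0 ≤ N) : False := by
  nlinarith [mul_le_mul_of_nonneg_left hsX (le_of_lt hs0), mul_pos hs0 hcon, sq_nonneg s]

private lemma wfa_le_of_sq_le_sq {a b : ℝ} (ha : 0 ≤ a) (hb : 0 ≤ b) (h : a^2 ≤ b^2) : a ≤ b := by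
  nlinarith

private lemma wfa_sq_le_sq {a b : ℝ} (ha : 0 ≤ a) (h : a ≤ b) : a^2 ≤ b^2 := by nlinarith

private lemma wfa_psi_jump {D₁ A G b ρ s1 : ℝ} (hD₁ : 0 ≤ D₁) (hA : 0 ≤ A) (hG : 0 ≤ G)
    (hb : 0 ≤ b) (hρ0 : 0 ≤ ρ) (hρu : ρ ≤ A + G) (hρl : A + G - b ≤ ρ)
    (hs : (D₁ - ρ)^2 ≤ s1) :
    D₁^2 - s1 + G^2 ≤ 2*D₁*A + 2*D₁*G + 2*b*G := by
  have h1 : D₁^2 - s1 + G^2 ≤ 2*D₁*ρ - ρ^2 + G^2 := by nlinarith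
  have h2 : 2*D₁*ρ ≤ 2*D₁*A + 2*D₁*G := by nlinarith [mul_le_mul_of_nonneg_left hρu hD₁]
  rcases le_total G b with h | h
  · nlinarith [mul_le_mul_of_nonneg_right h hG, sq_nonneg ρ]
  · have h3 : 0 ≤ ρ - (G - b) := by linarith
    have h4 : 0 ≤ ρ + (G - b) := by linarith
    nlinarith [mul_nonneg h3 h4, sq_nonneg b]

private lemma wfa_psi_last {D₁ A G ρ s1 : ℝ} (hD₁ : 0 ≤ D₁) (hρ0 : 0 ≤ ρ) (hρu : ρ ≤ A + G)
    (hs : (D₁ - ρ)^2 ≤ s1) : D₁^2 - s1 + G^2 ≤ 2*D₁*A + 2*D₁*G + G^2 := by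
  nlinarith [mul_le_mul_of_nonneg_left hρu hD₁]

private lemma wfa_abs_sq {a b c : ℝ} (h1 : a - b ≤ c) (h2 : b - a ≤ c) (hc : 0 ≤ c) :
    (a - b)^2 ≤ c^2 := by nlinarith

private lemma wfa_abel (w ψ : ℕ → ℝ) : ∀ n : ℕ, 1 ≤ n →
    ∑ t ∈ Icc 1 n, w t * (ψ t - ψ (t+1)) =
      ∑ t ∈ Icc 1 (n-1), (w t - w (t+1)) * (ψ 1 - ψ (t+1)) + w n * (ψ 1 - ψ (n+1)) := by
  intro n hn
  induction n, hn using Nat.le_induction with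
  | base => norm_num
  | succ m hm ih =>
    rw [Finset.sum_Icc_succ_top (by omega : 1 ≤ m + 1), ih]
    have hms : m + 1 - 1 = m := by omega
    rw [hms, show m = (m-1) + 1 by omega, Finset.sum_Icc_succ_top (by omega : 1 ≤ (m-1) + 1),
      show (m-1) + 1 - 1 = m - 1 by omega]
    ring

/-- warm-up Free AdaGrad with known horizon `T` and Lipschitz bound `L`. -/
theorem warmup_free_adagrad_regret
    {d : ℕ} {Θ : Set (EuclideanSpace ℝ (Fin d))}
    (hΘne : Θ.Nonempty) (hΘcl : IsClosed Θ) (hΘcv : Convex ℝ Θ)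
    {f : EuclideanSpace ℝ (Fin d) → ℝ}
    (hfconv : ConvexOn ℝ Set.univ f)
    {L : ℝ} (hL : 0 < L)
    {xstar : EuclideanSpace ℝ (Fin d)} (hxstarΘ : xstar ∈ Θ)
    (hmin : ∀ y ∈ Θ, f xstar ≤ f y)
    (proj : EuclideanSpace ℝ (Fin d) → EuclideanSpace ℝ (Fin d))
    (hprojΘ : ∀ z, proj z ∈ Θ)
    (hproj : ∀ z, ∀ y ∈ Θ, ‖z - proj z‖ ≤ ‖z - y‖)
    {γ₀ : ℝ} (hγ₀ : 0 < γ₀)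
    (γ : ℕ → ℝ) (hγ : ∀ j, γ j = γ₀ * 2 ^ j)
    (T : ℕ) (hT : 1 ≤ T)
    (x g : ℕ → EuclideanSpace ℝ (Fin d)) (k : ℕ → ℕ) (Γsq : ℕ → ℝ)
    (hx1Θ : x 1 ∈ Θ)
    (hg : ∀ t, 1 ≤ t → ∀ y, f (x t) + ⟪g t, y - x t⟫ ≤ f y)
    (hgL : ∀ t, 1 ≤ t → ‖g t‖ ≤ L)
    (hk0 : k 0 = 1) (hΓ1 : Γsq 1 = 0)
    (xplus : ℕ → ℕ → EuclideanSpace ℝ (Fin d))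
    (hxplus : ∀ t j, 1 ≤ t →
        xplus t j = proj (x t - (γ j / (L * Real.sqrt T)) • g t))
    (B : ℕ → ℕ → ℝ)
    (hB : ∀ t j, 1 ≤ t → B t j =
        2 * γ j / Real.sqrt j + Real.sqrt (Γsq t + γ j ^ 2 / T))
    (hkmono : ∀ t, 1 ≤ t → k (t - 1) ≤ k t)
    (hksel : ∀ t, 1 ≤ t → ‖xplus t (k t) - x 1‖ ≤ B t (k t))
    (hkmin : ∀ t, 1 ≤ t → ∀ j, k (t - 1) ≤ j → j < k t →
        B t j < ‖xplus t j - x 1‖)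
    (hxrec : ∀ t, 1 ≤ t → x (t + 1) = xplus t (k t))
    (hΓrec : ∀ t, 1 ≤ t → Γsq (t + 1) = Γsq t + γ (k t) ^ 2 / T) :
    ∑ t ∈ Finset.Icc 1 T, (f (x t) - f xstar)
      ≤ 10 * max ‖x 1 - xstar‖ γ₀ * L * Real.sqrt T
          * Real.sqrt (2 * Real.logb 2 (2 * max ‖x 1 - xstar‖ γ₀ / γ₀)) := by
  classical
  set D₁ : ℝ := ‖x 1 - xstar‖ with hD₁def
  set D : ℝ := max D₁ γ₀ with hDdef
  have hD₁0 : 0 ≤ D₁ := norm_nonneg _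
  have hD0 : 0 < D := lt_of_lt_of_le hγ₀ (le_max_right _ _)
  have hD₁D : D₁ ≤ D := le_max_left _ _
  have hγ₀D : γ₀ ≤ D := le_max_right _ _
  set sT : ℝ := Real.sqrt T with hsTdef
  have hT1 : (1:ℝ) ≤ (T:ℝ) := by exact_mod_cast hT
  have hsT1 : 1 ≤ sT := Real.one_le_sqrt.2 hT1
  have hsT0 : 0 < sT := lt_of_lt_of_le one_pos hsT1
  have hsTsq : sT ^ 2 = (T:ℝ) := Real.sq_sqrt (by linarith)
  have hTpos : (0:ℝ) < (T:ℝ) := by linarith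
  have hγpos : ∀ j, 0 < γ j := by
    intro j; rw [hγ]; positivity
  have hγmono : ∀ i j : ℕ, i ≤ j → γ i ≤ γ j := by
    intro i j hij; rw [hγ, hγ]
    have : (2:ℝ)^i ≤ 2^j := pow_le_pow_right₀ one_le_two hij
    nlinarith
  have hγsucc : ∀ j, γ (j+1) = 2 * γ j := by
    intro j; rw [hγ, hγ]; ring
  -- k is monotone
  have hkstep : ∀ t : ℕ, k t ≤ k (t+1) := by
    intro t
    have := hkmono (t+1) (by omega)
    simpa using this
  have hkm : ∀ s t : ℕ, s ≤ t → k s ≤ k t := by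
    intro s t hst
    induction t with
    | zero => simp_all
    | succ m ih =>
      rcases Nat.eq_or_lt_of_le hst with h | h
      · rw [h]
      · exact le_trans (ih (by omega)) (hkstep m)
  have hk1 : ∀ t, 1 ≤ k t := fun t => hk0 ▸ hkm 0 t (Nat.zero_le t)
  -- iterates remain in the feasible set
  have hxΘ : ∀ t, 1 ≤ t → x t ∈ Θ := by
    intro t ht
    induction t with
    | zero => omega
    | succ m ih =>
      rcases Nat.eq_or_lt_of_le ht with h | h
      · simpa [← h] using hx1Θ
      · rw [hxrec m (by omega), hxplus m _ (by omega)]; exact hprojΘ _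
  -- inner product expansion
  have hexp : ∀ (a b : EuclideanSpace ℝ (Fin d)) (c : ℝ),
      ‖a - c • b‖^2 = ‖a‖^2 - 2*c*⟪b, a⟫ + c^2*‖b‖^2 := by
    intro a b c
    rw [norm_sub_sq_real, real_inner_smul_right, norm_smul, Real.norm_eq_abs, mul_pow, sq_abs,
      real_inner_comm a b]
    ring
  -- the projection is a metric projection: nonexpansiveness towards points of Θ
  have hproj2 : ∀ z y, y ∈ Θ → ‖proj z - y‖ ≤ ‖z - y‖ := by
    intro z y hy
    set p := proj z with hp
    have hvar : ⟪z - p, y - p⟫ ≤ 0 := by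
      by_contra hcon
      push_neg at hcon
      set c : ℝ := ⟪z - p, y - p⟫ with hcdef
      have hnp1 : (0:ℝ) < ‖y - p‖^2 + 1 := by positivity
      set s : ℝ := min 1 (c/(‖y - p‖^2 + 1)) with hsdef
      have hs0 : 0 < s := lt_min one_pos (div_pos hcon hnp1)
      have hs1 : s ≤ 1 := min_le_left _ _
      have hsX : s * (‖y - p‖^2 + 1) ≤ c := by
        have := min_le_right 1 (c/(‖y - p‖^2 + 1))
        calc s * (‖y - p‖^2 + 1) ≤ (c/(‖y - p‖^2 + 1)) * (‖y - p‖^2 + 1) := by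
              apply mul_le_mul_of_nonneg_right this (le_of_lt hnp1)
          _ = c := by field_simp
      have hmem : p + s • (y - p) ∈ Θ := by
        have hmm := hΘcv (hprojΘ z) hy (by linarith : (0:ℝ) ≤ 1 - s) (le_of_lt hs0)
          (by ring : (1 - s) + s = 1)
        convert hmm using 1
        module
      have hle : ‖z - p‖ ≤ ‖z - (p + s • (y - p))‖ := hproj z _ hmem
      have hexp2 : ‖z - (p + s • (y - p))‖^2 = ‖z - p‖^2 - 2*s*⟪y - p, z - p⟫ + s^2*‖y - p‖^2 := by
        rw [show z - (p + s • (y - p)) = (z - p) - s • (y - p) by module]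
        exact hexp _ _ _
      have hcomm : ⟪y - p, z - p⟫ = c := real_inner_comm _ _
      have hsq : ‖z - p‖^2 ≤ ‖z - (p + s • (y - p))‖^2 := by
        nlinarith [norm_nonneg (z - p), norm_nonneg (z - (p + s • (y - p)))]
      rw [hexp2, hcomm] at hsq
      have hsq2 : 2*s*c ≤ s^2*‖y - p‖^2 := by linarith
      exact wfa_var_aux hs0 hcon hsX hsq2 (sq_nonneg _)
    have hkey : ‖z - y‖^2 = ‖z - p‖^2 + 2*⟪z - p, p - y⟫ + ‖p - y‖^2 := by
      rw [show z - y = (z - p) + (p - y) by abel]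
      exact norm_add_sq_real _ _
    have h2 : ⟪z - p, p - y⟫ = -⟪z - p, y - p⟫ := by
      rw [show p - y = -(y - p) by abel, inner_neg_right]
    rw [h2] at hkey
    clear_value p
    have hfin : ‖p - y‖^2 ≤ ‖z - y‖^2 := by linarith only [hkey, hvar, sq_nonneg ‖z - p‖]
    exact wfa_le_of_sq_le_sq (norm_nonneg _) (norm_nonneg _) hfin
  -- descent inequality
  have hdesc : ∀ t, 1 ≤ t → ∀ j, ∀ y ∈ Θ,
      ‖xplus t j - y‖^2 ≤ ‖x t - y‖^2 - 2*(γ j/(L*sT))*(f (x t) - f y) + γ j^2 / T := by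
    intro t ht j y hy
    have hγj := hγpos j
    have hη0 : 0 ≤ γ j/(L*sT) := by positivity
    set η : ℝ := γ j/(L*sT) with hηdef
    have h1 : ‖xplus t j - y‖ ≤ ‖(x t - η • g t) - y‖ := by
      rw [hxplus t j ht]; exact hproj2 _ _ hy
    have h2 : (x t - η • g t) - y = (x t - y) - η • g t := by abel
    have h3 : ‖(x t - y) - η • g t‖^2 = ‖x t - y‖^2 - 2*η*⟪g t, x t - y⟫ + η^2*‖g t‖^2 :=
      hexp _ _ _
    have h4 : f (x t) - f y ≤ ⟪g t, x t - y⟫ := by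
      have hgy := hg t ht y
      have hsub : ⟪g t, y - x t⟫ = -⟪g t, x t - y⟫ := by
        rw [show y - x t = -(x t - y) by abel, inner_neg_right]
      rw [hsub] at hgy; linarith only [hgy]
    have h5 : ‖g t‖^2 ≤ L^2 := wfa_sq_le_sq (norm_nonneg _) (hgL t ht)
    have h6 : η^2*‖g t‖^2 ≤ γ j^2 / T := by
      have hq : η^2 * L^2 = γ j^2 / T := by
        rw [hηdef, div_pow, mul_pow, hsTsq]
        rw [div_mul_eq_mul_div, mul_comm (γ j^2) (L^2), mul_div_mul_left _ _ (by positivity : L^2 ≠ 0)]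
      calc η^2*‖g t‖^2 ≤ η^2*L^2 := mul_le_mul_of_nonneg_left h5 (sq_nonneg η)
        _ = γ j^2 / T := hq
    have h7 : ‖xplus t j - y‖^2 ≤ ‖(x t - y) - η • g t‖^2 := by
      rw [← h2]
      exact wfa_sq_le_sq (norm_nonneg _) h1
    have h8 : -(2*η*⟪g t, x t - y⟫) ≤ -(2*η*(f (x t) - f y)) := by
      have := mul_le_mul_of_nonneg_left h4 (by linarith : (0:ℝ) ≤ 2*η)
      linarith
    calc ‖xplus t j - y‖^2 ≤ ‖(x t - y) - η • g t‖^2 := h7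
      _ = ‖x t - y‖^2 - 2*η*⟪g t, x t - y⟫ + η^2*‖g t‖^2 := h3
      _ ≤ ‖x t - y‖^2 - 2*η*(f (x t) - f y) + γ j^2/T := by linarith only [h6, h8]
  -- potential function
  set ψ : ℕ → ℝ := fun t => ‖x t - xstar‖^2 - Γsq t with hψdef
  set W : ℕ → ℝ := fun t => L*sT/(2*γ (k t)) with hWdef
  have hWpos : ∀ t, 0 < W t := by
    intro t
    have h := hγpos (k t)
    simp only [hWdef]
    exact div_pos (mul_pos hL hsT0) (by linarith only [h])
  have hrt0 : ∀ t, 1 ≤ t → 0 ≤ f (x t) - f xstar := by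
    intro t ht; have h := hmin (x t) (hxΘ t ht); linarith only [h]
  -- per-step inequality
  have hstep : ∀ t, 1 ≤ t → t ≤ T →
      (f (x t) - f xstar) ≤ W t * (ψ t - ψ (t+1)) ∧ ψ (t+1) ≤ ψ t := by
    intro t ht htT
    have hkey := hdesc t ht (k t) xstar hxstarΘ
    rw [← hxrec t ht] at hkey
    have hΓr : Γsq (t+1) = Γsq t + γ (k t)^2/T := hΓrec t ht
    have hr0 := hrt0 t ht
    have hγk := hγpos (k t)
    set η : ℝ := γ (k t)/(L*sT) with hηdef
    have hη0 : 0 < η := by rw [hηdef]; positivity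
    have hψdiff : ψ t - ψ (t+1) = (‖x t - xstar‖^2 - ‖x (t+1) - xstar‖^2) + γ (k t)^2/T := by
      simp only [hψdef]; rw [hΓr]; ring
    have hψge : 2*η*(f (x t) - f xstar) ≤ ψ t - ψ (t+1) := by
      rw [hψdiff]; linarith only [hkey]
    constructor
    · have hWη : W t * (2*η) = 1 := by
        simp only [hWdef, hηdef]
        field_simp
      have := mul_le_mul_of_nonneg_left hψge (le_of_lt (hWpos t))
      calc f (x t) - f xstar = W t * (2*η) * (f (x t) - f xstar) := by rw [hWη]; ring
        _ = W t * (2*η*(f (x t) - f xstar)) := by ring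
        _ ≤ W t * (ψ t - ψ (t+1)) := this
    · have h9 : 0 ≤ η * (f (x t) - f xstar) := mul_nonneg (le_of_lt hη0) hr0
      linarith only [hψge, h9]
  -- Γsq closed form
  have hΓform : ∀ t : ℕ, Γsq (t+1) = (∑ s ∈ Icc 1 t, γ (k s)^2)/T := by
    intro t
    induction t with
    | zero => simpa using hΓ1
    | succ m ih =>
      rw [hΓrec (m+1) (by omega), ih, Finset.sum_Icc_succ_top (by omega : 1 ≤ m+1)]
      ring
  have hΓnn : ∀ t, 0 ≤ Γsq (t+1) := by
    intro t; rw [hΓform]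
    apply div_nonneg _ (le_of_lt hTpos)
    exact Finset.sum_nonneg (fun s _ => by positivity)
  -- ψ is bounded by its initial value
  have hψ1 : ψ 1 = D₁^2 := by rw [hψdef]; simp [hΓ1, hD₁def]
  have hψle : ∀ t, 1 ≤ t → t ≤ T+1 → ψ t ≤ D₁^2 := by
    intro t ht htT
    induction t with
    | zero => omega
    | succ m ih =>
      rcases Nat.eq_or_lt_of_le ht with h | h
      · rw [← h, hψ1]
      · exact le_trans (hstep m (by omega) (by omega)).2 (ih (by omega) (by omega))
  -- rejected indices satisfy γ j ≤ D √j
  have hrej : ∀ t, 1 ≤ t → t ≤ T → ∀ j, k (t-1) ≤ j → j < k t → γ j ≤ D * Real.sqrt j := by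
    intro t ht htT j hj1 hj2
    have hj0 : 1 ≤ j := le_trans (hk1 (t-1)) hj1
    have hγj := hγpos j
    have hsj : (0:ℝ) < Real.sqrt j := Real.sqrt_pos.2 (by exact_mod_cast hj0)
    have hkm1 := hkmin t ht j hj1 hj2
    rw [hB t j ht] at hkm1
    have hΓt : 0 ≤ Γsq t := by
      have h := hΓnn (t-1)
      rwa [Nat.sub_add_cancel ht] at h
    have hQ : 0 ≤ Γsq t + γ j^2/T := by positivity
    have h1 : ‖xplus t j - xstar‖^2 ≤ D₁^2 + (Γsq t + γ j^2/T) := by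
      have hd := hdesc t ht j xstar hxstarΘ
      have hr := hrt0 t ht
      have hη : (0:ℝ) ≤ γ j/(L*sT) := by positivity
      have hsle : ψ t ≤ D₁^2 := hψle t ht (by omega)
      simp only [hψdef] at hsle
      have hmm : 0 ≤ (γ j/(L*sT)) * (f (x t) - f xstar) := mul_nonneg hη hr
      linarith only [hd, hsle, hmm]
    have h2 : ‖xplus t j - xstar‖ ≤ D₁ + Real.sqrt (Γsq t + γ j^2/T) := by
      calc ‖xplus t j - xstar‖ = Real.sqrt (‖xplus t j - xstar‖^2) :=
            (Real.sqrt_sq (norm_nonneg _)).symm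
        _ ≤ Real.sqrt (D₁^2 + (Γsq t + γ j^2/T)) := Real.sqrt_le_sqrt h1
        _ ≤ Real.sqrt (D₁^2) + Real.sqrt (Γsq t + γ j^2/T) := wfa_sqrt_add_le _ _ (sq_nonneg _) hQ
        _ = D₁ + Real.sqrt (Γsq t + γ j^2/T) := by rw [Real.sqrt_sq hD₁0]
    have h3 : ‖xplus t j - x 1‖ ≤ 2*D₁ + Real.sqrt (Γsq t + γ j^2/T) := by
      have htri := dist_triangle (xplus t j) xstar (x 1)
      simp only [dist_eq_norm] at htri
      have hrev : ‖xstar - x 1‖ = D₁ := by rw [hD₁def, norm_sub_rev]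
      rw [hrev] at htri
      linarith only [htri, h2]
    have h4 : 2*γ j/Real.sqrt j < 2*D₁ := by linarith only [hkm1, h3]
    rw [div_lt_iff₀ hsj] at h4
    have h5 : γ j ≤ D₁ * Real.sqrt j := by linarith only [h4]
    calc γ j ≤ D₁ * Real.sqrt j := h5
      _ ≤ D * Real.sqrt j := mul_le_mul_of_nonneg_right hD₁D (le_of_lt hsj)
  -- reached indices
  have hreach : ∀ t, 1 ≤ t → t ≤ T → γ (k t) ≤ 2*D*Real.sqrt (k T) := by
    intro t ht htT
    have hkT1 : (1:ℝ) ≤ Real.sqrt (k T) := by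
      rw [show (1:ℝ) = Real.sqrt 1 by simp]
      apply Real.sqrt_le_sqrt
      exact_mod_cast hk1 T
    have hvkT : k t ≤ k T := hkm t T htT
    rcases Nat.eq_or_lt_of_le (hk1 t) with h1 | h1
    · have hγ1 : γ (k t) = 2*γ₀ := by rw [← h1, hγ]; ring
      rw [hγ1]
      calc 2*γ₀ ≤ 2*D := by linarith only [hγ₀D]
        _ = 2*D*1 := by ring
        _ ≤ 2*D*Real.sqrt (k T) := by
            apply mul_le_mul_of_nonneg_left hkT1 (by linarith only [hD0])
    · have hex : ∃ u, k t ≤ k u := ⟨t, le_rfl⟩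
      have hspec : k t ≤ k (Nat.find hex) := Nat.find_spec hex
      have ht'le : Nat.find hex ≤ t := Nat.find_min' hex le_rfl
      have ht'1 : 1 ≤ Nat.find hex := by
        by_contra hc
        push_neg at hc
        have h0 : Nat.find hex = 0 := by omega
        rw [h0, hk0] at hspec
        omega
      have hprev : k (Nat.find hex - 1) < k t := by
        by_contra hc
        push_neg at hc
        exact Nat.find_min hex (show Nat.find hex - 1 < Nat.find hex by omega) hc
      have hrj := hrej (Nat.find hex) ht'1 (le_trans ht'le htT) (k t - 1)
        (by omega) (by omega)
      have hvs : γ (k t) = 2 * γ (k t - 1) := by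
        have h := hγsucc (k t - 1)
        rwa [show k t - 1 + 1 = k t by omega] at h
      have hmon : Real.sqrt ((k t - 1 : ℕ)) ≤ Real.sqrt (k T) := by
        apply Real.sqrt_le_sqrt
        exact_mod_cast (by omega : k t - 1 ≤ k T)
      calc γ (k t) = 2*γ (k t - 1) := hvs
        _ ≤ 2*(D*Real.sqrt ((k t - 1 : ℕ))) := by linarith only [hrj]
        _ ≤ 2*(D*Real.sqrt (k T)) := by
            apply mul_le_mul_of_nonneg_left _ (by norm_num : (0:ℝ) ≤ 2)
            exact mul_le_mul_of_nonneg_left hmon (le_of_lt hD0)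
        _ = 2*D*Real.sqrt (k T) := by ring
  -- bound on k T
  have hkK : (k T : ℝ) ≤ 2 * Real.logb 2 (2*D/γ₀) := by
    have h1 : γ₀ * 2^(k T) ≤ 2*D*Real.sqrt (k T) := by
      have h := hreach T hT le_rfl
      rwa [hγ] at h
    have h2 : Real.sqrt (k T) ≤ Real.sqrt ((2:ℝ)^(k T)) := by
      apply Real.sqrt_le_sqrt
      have := Nat.le_of_lt (Nat.lt_two_pow_self (n := k T))
      exact_mod_cast this
    have hX0 : (0:ℝ) < (2:ℝ)^(k T) := by positivity
    have hs2 : (0:ℝ) < Real.sqrt ((2:ℝ)^(k T)) := Real.sqrt_pos.2 hX0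
    have hss : Real.sqrt ((2:ℝ)^(k T)) * Real.sqrt ((2:ℝ)^(k T)) = 2^(k T) :=
      Real.mul_self_sqrt (le_of_lt hX0)
    have h3 : γ₀ * (Real.sqrt ((2:ℝ)^(k T)) * Real.sqrt ((2:ℝ)^(k T)))
        ≤ 2*D*Real.sqrt ((2:ℝ)^(k T)) := by
      rw [hss]
      have := mul_le_mul_of_nonneg_left h2 (by linarith only [hD0] : (0:ℝ) ≤ 2*D)
      linarith only [h1, this]
    have h4 : Real.sqrt ((2:ℝ)^(k T)) ≤ 2*D/γ₀ := by
      rw [le_div_iff₀ hγ₀]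
      have := le_of_mul_le_mul_right (by linarith only [h3] :
        (γ₀ * Real.sqrt ((2:ℝ)^(k T))) * Real.sqrt ((2:ℝ)^(k T)) ≤ (2*D) * Real.sqrt ((2:ℝ)^(k T))) hs2
      linarith only [this]
    have h5 : (2:ℝ)^(k T) ≤ (2*D/γ₀)^2 := by
      have hsq := wfa_sq_le_sq (le_of_lt hs2) h4
      rw [sq, hss] at hsq
      exact hsq
    have hpow : Real.logb 2 ((2:ℝ)^(k T)) = k T := by
      rw [Real.logb_pow]
      simp
    have hmono := Real.logb_le_logb_of_le one_lt_two hX0 h5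
    rw [hpow, show ((2*D/γ₀)^2 : ℝ) = (2*D/γ₀)^(2:ℕ) by norm_num, Real.logb_pow] at hmono
    exact_mod_cast hmono
  -- auxiliary quantities
  set A : ℕ → ℝ := fun t => 2*γ (k t)/Real.sqrt (k t) with hAdef
  set Gq : ℕ → ℝ := fun t => Real.sqrt (Γsq (t+1)) with hGqdef
  set bb : ℕ → ℝ := fun t => γ (k t)/sT with hbbdef
  have hA0 : ∀ t, 0 ≤ A t := by
    intro t; rw [hAdef]
    exact div_nonneg (by have := hγpos (k t); positivity) (Real.sqrt_nonneg _)
  have hG0 : ∀ t, 0 ≤ Gq t := fun t => Real.sqrt_nonneg _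
  have hbb0 : ∀ t, 0 ≤ bb t := by
    intro t; rw [hbbdef]
    exact div_nonneg (le_of_lt (hγpos (k t))) (le_of_lt hsT0)
  -- the accepted step keeps the iterate in the ball
  have hball : ∀ t, 1 ≤ t → t ≤ T → ‖x (t+1) - x 1‖ ≤ A t + Gq t := by
    intro t ht htT
    have h := hksel t ht
    rw [← hxrec t ht, hB t (k t) ht] at h
    have hΓr : Γsq t + γ (k t)^2/T = Γsq (t+1) := (hΓrec t ht).symm
    rw [hΓr] at h
    simpa only [hAdef, hGqdef] using h
  -- Gq is at most γ (k t)
  have hGle : ∀ t, 1 ≤ t → t ≤ T → Gq t ≤ γ (k t) := by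
    intro t ht htT
    have hsum : (∑ s ∈ Icc 1 t, γ (k s)^2) ≤ (T:ℝ) * γ (k t)^2 := by
      calc ∑ s ∈ Icc 1 t, γ (k s)^2 ≤ ∑ s ∈ Icc 1 t, γ (k t)^2 := by
            apply Finset.sum_le_sum
            intro i hi
            exact wfa_sq_le_sq (le_of_lt (hγpos (k i)))
              (hγmono (k i) (k t) (hkm i t (Finset.mem_Icc.1 hi).2))
        _ = (t:ℝ) * γ (k t)^2 := by
            rw [Finset.sum_const, Nat.card_Icc]
            simp
        _ ≤ (T:ℝ) * γ (k t)^2 := by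
            have hc : (t:ℝ) ≤ (T:ℝ) := by exact_mod_cast htT
            exact mul_le_mul_of_nonneg_right hc (sq_nonneg _)
    have hΓle : Γsq (t+1) ≤ γ (k t)^2 := by
      rw [hΓform t, div_le_iff₀ hTpos]
      linarith only [hsum]
    simp only [hGqdef]
    calc Real.sqrt (Γsq (t+1)) ≤ Real.sqrt (γ (k t)^2) := Real.sqrt_le_sqrt hΓle
      _ = γ (k t) := Real.sqrt_sq (le_of_lt (hγpos _))
  -- the jump lower bound
  have hjump : ∀ t, 1 ≤ t → t + 1 ≤ T → k t < k (t+1) →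
      A t + Gq t - bb t < ‖x (t+1) - x 1‖ := by
    intro t ht ht1T hlt
    have h2 := hkmin (t+1) (by omega) (k t)
      (by simp only [Nat.add_sub_cancel]; exact le_rfl) hlt
    rw [hB (t+1) (k t) (by omega)] at h2
    have hup : ‖xplus (t+1) (k t) - x 1‖ ≤ ‖x (t+1) - x 1‖ + bb t := by
      rw [hxplus (t+1) (k t) (by omega)]
      have hγk := hγpos (k t)
      have hη0 : (0:ℝ) ≤ γ (k t)/(L*sT) := by positivity
      have h3 : x (t+1) - (γ (k t)/(L*sT)) • g (t+1) - x 1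
          = (x (t+1) - x 1) - (γ (k t)/(L*sT)) • g (t+1) := by abel
      have hsmul : ‖(γ (k t)/(L*sT)) • g (t+1)‖ ≤ bb t := by
        rw [norm_smul, Real.norm_eq_abs, abs_of_nonneg hη0]
        have hgb := hgL (t+1) (by omega)
        have hmm := mul_le_mul_of_nonneg_left hgb hη0
        have heq : (γ (k t)/(L*sT)) * L = bb t := by
          simp only [hbbdef]
          field_simp
        rw [heq] at hmm
        exact hmm
      calc ‖proj (x (t+1) - (γ (k t)/(L*sT)) • g (t+1)) - x 1‖
          ≤ ‖x (t+1) - (γ (k t)/(L*sT)) • g (t+1) - x 1‖ := hproj2 _ _ hx1Θ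
        _ = ‖(x (t+1) - x 1) - (γ (k t)/(L*sT)) • g (t+1)‖ := by rw [h3]
        _ ≤ ‖x (t+1) - x 1‖ + ‖(γ (k t)/(L*sT)) • g (t+1)‖ := norm_sub_le _ _
        _ ≤ ‖x (t+1) - x 1‖ + bb t := by linarith only [hsmul]
    have hlow : A t + Gq t ≤ 2*γ (k t)/Real.sqrt (k t) + Real.sqrt (Γsq (t+1) + γ (k t)^2/T) := by
      simp only [hAdef, hGqdef]
      have hmm : Real.sqrt (Γsq (t+1)) ≤ Real.sqrt (Γsq (t+1) + γ (k t)^2/T) := by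
        apply Real.sqrt_le_sqrt
        have h0 : (0:ℝ) ≤ γ (k t)^2/T := by positivity
        linarith only [h0]
      linarith only [hmm]
    linarith only [h2, hup, hlow]
  -- Ψ bound at jumps
  have hsqdist : ∀ t, (D₁ - ‖x (t+1) - x 1‖)^2 ≤ ‖x (t+1) - xstar‖^2 := by
    intro t
    apply wfa_abs_sq _ _ (norm_nonneg _)
    · have htri := dist_triangle (x 1) (x (t+1)) xstar
      simp only [dist_eq_norm] at htri
      rw [norm_sub_rev (x 1) (x (t+1))] at htri
      rw [hD₁def]
      linarith only [htri]
    · have htri := dist_triangle (x (t+1)) xstar (x 1)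
      simp only [dist_eq_norm] at htri
      rw [norm_sub_rev xstar (x 1), ← hD₁def] at htri
      linarith only [htri]
  have hΓGq : ∀ t, Γsq (t+1) = (Gq t)^2 := by
    intro t
    simp only [hGqdef]
    exact (Real.sq_sqrt (hΓnn t)).symm
  have hΨjump : ∀ t, 1 ≤ t → t + 1 ≤ T → k t < k (t+1) →
      ψ 1 - ψ (t+1) ≤ 2*D₁*A t + 2*D₁*Gq t + 2*(bb t)*(Gq t) := by
    intro t ht ht1T hlt
    have hρu := hball t ht (by omega)
    have hρl := le_of_lt (hjump t ht ht1T hlt)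
    have hkey := wfa_psi_jump hD₁0 (hA0 t) (hG0 t) (hbb0 t) (norm_nonneg (x (t+1) - x 1))
      hρu (by linarith only [hρl]) (hsqdist t)
    have hψe : ψ 1 - ψ (t+1) = D₁^2 - ‖x (t+1) - xstar‖^2 + (Gq t)^2 := by
      simp only [hψdef]
      rw [← hΓGq t, hΓ1, hD₁def]
      ring
    rw [hψe]
    exact hkey
  -- Ψ bound at the last step
  have hΨlast : ψ 1 - ψ (T+1) ≤ 2*D₁*A T + 2*D₁*Gq T + (Gq T)^2 := by
    have hρu := hball T hT le_rfl
    have hkey := wfa_psi_last hD₁0 (norm_nonneg (x (T+1) - x 1)) hρu (hsqdist T)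
    have hψe : ψ 1 - ψ (T+1) = D₁^2 - ‖x (T+1) - xstar‖^2 + (Gq T)^2 := by
      simp only [hψdef]
      rw [← hΓGq T, hΓ1, hD₁def]
      ring
    rw [hψe]
    exact hkey
  -- ===== final assembly =====
  have hsT' : 0 ≤ L*sT := le_of_lt (mul_pos hL hsT0)
  set kb : ℝ := Real.sqrt (k T) with hkbdef
  have hkb1 : (1:ℝ) ≤ kb := by
    rw [hkbdef, show (1:ℝ) = Real.sqrt 1 by simp]
    apply Real.sqrt_le_sqrt
    exact_mod_cast hk1 T
  have hkb0 : 0 ≤ kb := by linarith only [hkb1]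
  -- step 1 : sum of regrets bounded by weighted telescoping sum
  have hsum1 : ∑ t ∈ Icc 1 T, (f (x t) - f xstar) ≤ ∑ t ∈ Icc 1 T, W t * (ψ t - ψ (t+1)) := by
    apply Finset.sum_le_sum
    intro t hti
    obtain ⟨h1, h2⟩ := Finset.mem_Icc.1 hti
    exact (hstep t h1 h2).1
  have habel := wfa_abel W ψ T hT
  -- the jump set
  set J : Finset ℕ := (Icc 1 (T-1)).filter (fun t => k t < k (t+1)) with hJdef
  have hJsub : J ⊆ Icc 1 (T-1) := Finset.filter_subset _ _
  have hJmem : ∀ t ∈ J, 1 ≤ t ∧ t + 1 ≤ T ∧ k t < k (t+1) := by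
    intro t htJ
    have h1 := Finset.mem_Icc.1 (hJsub htJ)
    have h2 := (Finset.mem_filter.1 htJ).2
    exact ⟨h1.1, by omega, h2⟩
  have hTnotJ : T ∉ J := by
    intro hTin
    have := Finset.mem_Icc.1 (hJsub hTin)
    omega
  set J' : Finset ℕ := insert T J with hJ'def
  have hJ'mem : ∀ t ∈ J', 1 ≤ t ∧ t ≤ T := by
    intro t htJ
    rcases Finset.mem_insert.1 htJ with rfl | hJt
    · exact ⟨hT, le_rfl⟩
    · have := Finset.mem_Icc.1 (hJsub hJt); omega
  have hstrict : ∀ t1 ∈ J', ∀ t2 ∈ J', t1 < t2 → k t1 < k t2 := by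
    intro t1 h1 t2 h2 hlt
    have ht1J : t1 ∈ J := by
      rcases Finset.mem_insert.1 h1 with rfl | h
      · have := (hJ'mem t2 h2).2
        omega
      · exact h
    have hk12 : k t1 < k (t1+1) := (Finset.mem_filter.1 ht1J).2
    exact lt_of_lt_of_le hk12 (hkm (t1+1) t2 (by omega))
  have hkinj : ∀ t1 ∈ J', ∀ t2 ∈ J', k t1 = k t2 → t1 = t2 := by
    intro t1 h1 t2 h2 heq
    by_contra hne
    rcases lt_or_gt_of_ne hne with h | h
    · exact absurd heq (ne_of_lt (hstrict t1 h1 t2 h2 h))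
    · exact absurd heq.symm (ne_of_lt (hstrict t2 h2 t1 h1 h))
  have hcard : J'.card ≤ k T := by
    have h := Finset.card_le_card_of_injOn k
      (fun t htJ => Finset.mem_Icc.2 ⟨hk1 t, hkm t T (hJ'mem t htJ).2⟩)
      (fun t1 h1 t2 h2 heq => hkinj t1 h1 t2 h2 heq)
    calc J'.card ≤ (Icc 1 (k T)).card := h
      _ = k T := by rw [Nat.card_Icc]; omega
  -- weights are nonincreasing
  have hWstep : ∀ t : ℕ, 0 ≤ W t - W (t+1) := by
    intro t
    have hγle := hγmono (k t) (k (t+1)) (hkstep t)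
    have h1 := hγpos (k t)
    have h2 := hγpos (k (t+1))
    simp only [hWdef]
    rw [sub_nonneg]
    exact div_le_div_of_nonneg_left hsT' (by linarith only [h1] : (0:ℝ) < 2*γ (k t))
      (by linarith only [hγle])
  -- collapse the Abel sum to the jump set
  have hcollapse : ∑ t ∈ Icc 1 (T-1), (W t - W (t+1)) * (ψ 1 - ψ (t+1))
      = ∑ t ∈ J, (W t - W (t+1)) * (ψ 1 - ψ (t+1)) := by
    rw [hJdef]
    symm
    apply Finset.sum_filter_of_ne
    intro t hti hne
    by_contra hc
    push_neg at hc
    have heqk : k (t+1) = k t := le_antisymm hc (hkstep t)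
    have : W t = W (t+1) := by simp only [hWdef, heqk]
    rw [this] at hne
    simp at hne
  -- per-jump bound
  have hperjump : ∀ t ∈ J, (W t - W (t+1)) * (ψ 1 - ψ (t+1))
      ≤ W t * (2*D₁*A t) + W t * (2*D₁*Gq t) + W t * (2*(bb t)*(Gq t)) := by
    intro t htJ
    obtain ⟨h1, h2, h3⟩ := hJmem t htJ
    have hU := hΨjump t h1 h2 h3
    have hU0 : 0 ≤ 2*D₁*A t + 2*D₁*Gq t + 2*(bb t)*(Gq t) := by
      have a1 : 0 ≤ 2*D₁*A t := mul_nonneg (by linarith only [hD₁0]) (hA0 t)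
      have a2 : 0 ≤ 2*D₁*Gq t := mul_nonneg (by linarith only [hD₁0]) (hG0 t)
      have a3 : 0 ≤ 2*(bb t)*(Gq t) := mul_nonneg (by linarith only [hbb0 t]) (hG0 t)
      linarith only [a1, a2, a3]
    have hc0 := hWstep t
    have hcW : W t - W (t+1) ≤ W t := by linarith only [hWpos (t+1)]
    calc (W t - W (t+1)) * (ψ 1 - ψ (t+1)) ≤ (W t - W (t+1)) * (2*D₁*A t + 2*D₁*Gq t + 2*(bb t)*(Gq t)) :=
          mul_le_mul_of_nonneg_left hU hc0
      _ ≤ W t * (2*D₁*A t + 2*D₁*Gq t + 2*(bb t)*(Gq t)) := mul_le_mul_of_nonneg_right hcW hU0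
      _ = W t * (2*D₁*A t) + W t * (2*D₁*Gq t) + W t * (2*(bb t)*(Gq t)) := by ring
  -- last-step bound
  have hlastbd : W T * (ψ 1 - ψ (T+1))
      ≤ W T * (2*D₁*A T) + W T * (2*D₁*Gq T) + W T * (Gq T)^2 := by
    have := mul_le_mul_of_nonneg_left hΨlast (le_of_lt (hWpos T))
    calc W T * (ψ 1 - ψ (T+1)) ≤ W T * (2*D₁*A T + 2*D₁*Gq T + (Gq T)^2) := this
      _ = W T * (2*D₁*A T) + W T * (2*D₁*Gq T) + W T * (Gq T)^2 := by ring
  -- ====== the four sums ======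
  -- S1
  have hS1 : ∑ t ∈ J', W t * (2*D₁*A t) ≤ 4*(D*L*sT*kb) := by
    have heq : ∀ t ∈ J', W t * (2*D₁*A t) = 2*D₁*(L*sT) * (1/Real.sqrt (k t)) := by
      intro t _
      have h1 := hγpos (k t)
      have hs : Real.sqrt (k t) ≠ 0 := by
        have : (0:ℝ) < Real.sqrt (k t) := Real.sqrt_pos.2 (by exact_mod_cast hk1 t)
        linarith only [this]
      simp only [hWdef, hAdef]
      field_simp
    rw [Finset.sum_congr rfl heq, ← Finset.mul_sum]
    have himg : ∑ t ∈ J', (1:ℝ)/Real.sqrt (k t) = ∑ j ∈ J'.image k, (1:ℝ)/Real.sqrt j := by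
      rw [Finset.sum_image hkinj]
    have hsum2 : ∑ t ∈ J', (1:ℝ)/Real.sqrt (k t) ≤ 2*kb := by
      rw [himg]
      calc ∑ j ∈ J'.image k, (1:ℝ)/Real.sqrt j ≤ ∑ j ∈ Icc 1 (k T), (1:ℝ)/Real.sqrt j := by
            apply Finset.sum_le_sum_of_subset_of_nonneg
            · intro j hj
              obtain ⟨t, htJ, rfl⟩ := Finset.mem_image.1 hj
              exact Finset.mem_Icc.2 ⟨hk1 t, hkm t T (hJ'mem t htJ).2⟩
            · intro j _ _
              positivity
        _ ≤ 2*Real.sqrt (k T) := wfa_sum_inv_sqrt (k T)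
        _ = 2*kb := by rw [hkbdef]
    have hnn : (0:ℝ) ≤ 2*D₁*(L*sT) := by
      apply mul_nonneg (by linarith only [hD₁0]) hsT'
    calc 2*D₁*(L*sT) * ∑ t ∈ J', (1:ℝ)/Real.sqrt (k t) ≤ 2*D₁*(L*sT) * (2*kb) :=
          mul_le_mul_of_nonneg_left hsum2 hnn
      _ = 4*(D₁*L*sT*kb) := by ring
      _ ≤ 4*(D*L*sT*kb) := by
          have := mul_le_mul_of_nonneg_right hD₁D (mul_nonneg (mul_nonneg hL.le hsT0.le) hkb0)
          nlinarith [this]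
  -- ratio of γ's
  have hratio : ∀ s' t' : ℕ, s' ≤ t' → γ (k s')^2/γ (k t')^2 = (1/4:ℝ)^(k t' - k s') := by
    intro s' t' hst
    have hab : k s' ≤ k t' := hkm s' t' hst
    set m := k t' - k s' with hm
    have hkt : k t' = k s' + m := by omega
    rw [hγ, hγ, hkt, pow_add]
    have h2m : ((2:ℝ)^m)^2 = 4^m := by
      rw [← pow_mul, mul_comm m 2, pow_mul]
      norm_num
    have hne : (γ₀*((2:ℝ)^(k s')*2^m))^2 ≠ 0 := by positivity
    rw [div_eq_iff hne]
    have hq : ((1:ℝ)/4)^m * 4^m = 1 := by rw [← mul_pow]; norm_num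
    calc (γ₀*2^(k s'))^2 = (((1:ℝ)/4)^m * 4^m) * (γ₀*2^(k s'))^2 := by rw [hq]; ring
      _ = (1/4:ℝ)^m * (γ₀*((2:ℝ)^(k s')*2^m))^2 := by
          rw [mul_pow γ₀ ((2:ℝ)^(k s')*(2:ℝ)^m), mul_pow ((2:ℝ)^(k s')) ((2:ℝ)^m), h2m,
            mul_pow γ₀ ((2:ℝ)^(k s'))]
          ring
  -- squared weighted Gq terms
  have hT0' : (T:ℝ) ≠ 0 := ne_of_gt hTpos
  have hWGsq : ∀ t ∈ J', (W t * Gq t)^2 = (L^2/4) * ∑ s ∈ Icc 1 t, (1/4:ℝ)^(k t - k s) := by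
    intro t _
    have hγt := hγpos (k t)
    have hγt0 : γ (k t) ≠ 0 := ne_of_gt hγt
    have hW2 : W t^2 = L^2*(T:ℝ)/(4*γ (k t)^2) := by
      simp only [hWdef]
      rw [div_pow, mul_pow, hsTsq, mul_pow]
      norm_num
    have hGq2 : (Gq t)^2 = Γsq (t+1) := (hΓGq t).symm
    rw [mul_pow, hGq2, hW2, hΓform t, Finset.sum_div, Finset.mul_sum, Finset.mul_sum]
    apply Finset.sum_congr rfl
    intro i hi
    rw [← hratio i t (Finset.mem_Icc.1 hi).2]
    have hγi := hγpos (k i)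
    field_simp
  -- the swap and geometric bound
  have hsqsum : ∑ t ∈ J', (W t * Gq t)^2 ≤ L^2*(T:ℝ)/3 := by
    rw [Finset.sum_congr rfl hWGsq, ← Finset.mul_sum]
    have hswap : ∑ t ∈ J', ∑ s ∈ Icc 1 t, (1/4:ℝ)^(k t - k s)
        = ∑ s ∈ Icc 1 T, ∑ t ∈ J'.filter (fun t => s ≤ t), (1/4:ℝ)^(k t - k s) := by
      have h1 : ∀ t ∈ J', ∑ s ∈ Icc 1 t, (1/4:ℝ)^(k t - k s)
          = ∑ s ∈ Icc 1 T, (if s ≤ t then (1/4:ℝ)^(k t - k s) else 0) := by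
        intro t htJ
        rw [← Finset.sum_filter]
        congr 1
        ext s'
        simp only [Finset.mem_Icc, Finset.mem_filter]
        have := (hJ'mem t htJ).2
        omega
      rw [Finset.sum_congr rfl h1, Finset.sum_comm]
      apply Finset.sum_congr rfl
      intro s' _
      rw [Finset.sum_filter]
    have hinner : ∀ s' ∈ Icc 1 T, ∑ t ∈ J'.filter (fun t => s' ≤ t), (1/4:ℝ)^(k t - k s') ≤ 4/3 := by
      intro s' _
      have hpair : ∀ t1 ∈ J'.filter (fun t => s' ≤ t), ∀ t2 ∈ J'.filter (fun t => s' ≤ t),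
          k t1 - k s' = k t2 - k s' → t1 = t2 := by
        intro t1 h1 t2 h2 heq
        have hm1 := Finset.mem_filter.1 h1
        have hm2 := Finset.mem_filter.1 h2
        have hka : k s' ≤ k t1 := hkm s' t1 hm1.2
        have hkb2 : k s' ≤ k t2 := hkm s' t2 hm2.2
        exact hkinj t1 hm1.1 t2 hm2.1 (by omega)
      calc ∑ t ∈ J'.filter (fun t => s' ≤ t), (1/4:ℝ)^(k t - k s')
          = ∑ m ∈ (J'.filter (fun t => s' ≤ t)).image (fun t => k t - k s'), (1/4:ℝ)^m :=
            (Finset.sum_image hpair).symm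
        _ ≤ 4/3 := wfa_sum_quarter _
    calc L^2/4 * ∑ t ∈ J', ∑ s ∈ Icc 1 t, (1/4:ℝ)^(k t - k s)
        = L^2/4 * ∑ s ∈ Icc 1 T, ∑ t ∈ J'.filter (fun t => s ≤ t), (1/4:ℝ)^(k t - k s) := by
          rw [hswap]
      _ ≤ L^2/4 * ∑ s ∈ Icc 1 T, (4/3 : ℝ) := by
          apply mul_le_mul_of_nonneg_left _ (by positivity)
          exact Finset.sum_le_sum hinner
      _ = L^2/4 * ((T:ℝ) * (4/3)) := by
          rw [Finset.sum_const, Nat.card_Icc]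
          simp
      _ = L^2*(T:ℝ)/3 := by ring
  -- Cauchy-Schwarz for S2
  have hS2 : ∑ t ∈ J', W t * (2*D₁*Gq t) ≤ (7/6)*(D*L*sT*kb) := by
    have heq : ∀ t ∈ J', W t * (2*D₁*Gq t) = 2*D₁*(W t * Gq t) := by
      intro t _; ring
    rw [Finset.sum_congr rfl heq, ← Finset.mul_sum]
    have hvnn : (0:ℝ) ≤ ∑ t ∈ J', W t * Gq t :=
      Finset.sum_nonneg (fun t _ => mul_nonneg (le_of_lt (hWpos t)) (hG0 t))
    have hcs : (∑ t ∈ J', W t * Gq t)^2 ≤ (J'.card : ℝ) * ∑ t ∈ J', (W t * Gq t)^2 := by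
      have h := Finset.sum_mul_sq_le_sq_mul_sq J' (fun _ => (1:ℝ)) (fun t => W t * Gq t)
      simpa using h
    have hsum3 : ∑ t ∈ J', W t * Gq t ≤ kb * (L*sT*(7/12)) := by
      have h1 : (∑ t ∈ J', W t * Gq t)^2 ≤ (k T : ℝ) * (L^2*(T:ℝ)/3) := by
        have hc : (J'.card : ℝ) ≤ (k T : ℝ) := by exact_mod_cast hcard
        have h2 := hsqsum
        have h3 : (0:ℝ) ≤ ∑ t ∈ J', (W t * Gq t)^2 :=
          Finset.sum_nonneg (fun t _ => sq_nonneg _)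
        calc (∑ t ∈ J', W t * Gq t)^2 ≤ (J'.card : ℝ) * ∑ t ∈ J', (W t * Gq t)^2 := hcs
          _ ≤ (k T : ℝ) * ∑ t ∈ J', (W t * Gq t)^2 := mul_le_mul_of_nonneg_right hc h3
          _ ≤ (k T : ℝ) * (L^2*(T:ℝ)/3) := by
              apply mul_le_mul_of_nonneg_left h2 (by positivity)
      have h4 : (kb * (L*sT*(7/12)))^2 = (k T : ℝ) * (T:ℝ) * (L^2*(49/144)) := by
        rw [mul_pow, mul_pow, mul_pow, hkbdef, Real.sq_sqrt (by positivity : (0:ℝ) ≤ (k T:ℝ)), hsTsq]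
        ring
      have h5 : (∑ t ∈ J', W t * Gq t)^2 ≤ (kb * (L*sT*(7/12)))^2 := by
        rw [h4]
        have hkT0 : (0:ℝ) ≤ (k T : ℝ) := by positivity
        nlinarith [h1, mul_nonneg hkT0 (mul_nonneg (le_of_lt hTpos) (sq_nonneg L))]
      have h6 : (0:ℝ) ≤ kb * (L*sT*(7/12)) := by positivity
      nlinarith [h5, hvnn, h6]
    have hnn : (0:ℝ) ≤ 2*D₁ := by linarith only [hD₁0]
    calc 2*D₁ * ∑ t ∈ J', W t * Gq t ≤ 2*D₁ * (kb * (L*sT*(7/12))) :=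
          mul_le_mul_of_nonneg_left hsum3 hnn
      _ = (7/6)*(D₁*L*sT*kb) := by ring
      _ ≤ (7/6)*(D*L*sT*kb) := by
          have := mul_le_mul_of_nonneg_right hD₁D (mul_nonneg (mul_nonneg hL.le hsT0.le) hkb0)
          nlinarith [this]
  -- S3
  have hS3 : ∑ t ∈ J, W t * (2*(bb t)*(Gq t)) ≤ 2*(D*L*sT*kb) := by
    have heq : ∀ t ∈ J, W t * (2*(bb t)*(Gq t)) = L * Gq t := by
      intro t _
      have h1 := hγpos (k t)
      have h10 : γ (k t) ≠ 0 := ne_of_gt h1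
      have hsT0' : sT ≠ 0 := ne_of_gt hsT0
      simp only [hWdef, hbbdef]
      field_simp
    rw [Finset.sum_congr rfl heq]
    have hstep3 : ∑ t ∈ J, L * Gq t ≤ ∑ t ∈ J, L * γ (k t) := by
      apply Finset.sum_le_sum
      intro t htJ
      obtain ⟨h1, h2, _⟩ := hJmem t htJ
      exact mul_le_mul_of_nonneg_left (hGle t h1 (by omega)) hL.le
    have hJJ' : J ⊆ J' := Finset.subset_insert _ _
    have hsum4 : ∑ t ∈ J, γ (k t) ≤ γ₀ * 2^(k T) := by
      have himg : ∑ t ∈ J, γ (k t) = ∑ j ∈ J.image k, γ j := by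
        rw [Finset.sum_image (fun t1 h1 t2 h2 heq =>
          hkinj t1 (hJJ' h1) t2 (hJJ' h2) heq)]
      rw [himg]
      calc ∑ j ∈ J.image k, γ j ≤ ∑ j ∈ Icc 1 (k T - 1), γ j := by
            apply Finset.sum_le_sum_of_subset_of_nonneg
            · intro j hj
              obtain ⟨t, htJ, rfl⟩ := Finset.mem_image.1 hj
              obtain ⟨h1, h2, h3⟩ := hJmem t htJ
              have : k (t+1) ≤ k T := hkm (t+1) T h2
              exact Finset.mem_Icc.2 ⟨hk1 t, by omega⟩
            · intro j _ _
              exact le_of_lt (hγpos j)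
        _ = ∑ j ∈ Icc 1 (k T - 1), γ₀ * 2^j := by
            apply Finset.sum_congr rfl
            intro j _
            rw [hγ]
        _ = γ₀ * ∑ j ∈ Icc 1 (k T - 1), (2:ℝ)^j := by rw [Finset.mul_sum]
        _ ≤ γ₀ * 2^(k T - 1 + 1) := mul_le_mul_of_nonneg_left (wfa_sum_two_pow _) (le_of_lt hγ₀)
        _ = γ₀ * 2^(k T) := by rw [show k T - 1 + 1 = k T by have := hk1 T; omega]
    have hre : γ₀ * 2^(k T) ≤ 2*D*kb := by
      have h := hreach T hT le_rfl
      rwa [hγ] at h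
    calc ∑ t ∈ J, L * Gq t ≤ ∑ t ∈ J, L * γ (k t) := hstep3
      _ = L * ∑ t ∈ J, γ (k t) := by rw [Finset.mul_sum]
      _ ≤ L * (2*D*kb) := by
          apply mul_le_mul_of_nonneg_left _ hL.le
          linarith only [hsum4, hre]
      _ = 2*(D*L*1*kb) := by ring
      _ ≤ 2*(D*L*sT*kb) := by
          have h1 : D*L*1*kb ≤ D*L*sT*kb := by
            have h2 : D*L*1 ≤ D*L*sT := by
              have h4 := mul_le_mul_of_nonneg_left hsT1 (mul_nonneg hD0.le hL.le)
              linarith only [h4]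
            exact mul_le_mul_of_nonneg_right h2 hkb0
          linarith only [h1]
  -- S4
  have hS4 : W T * (Gq T)^2 ≤ D*L*sT*kb := by
    have hGT := hGle T hT le_rfl
    have hγT := hγpos (k T)
    have hsq' : (Gq T)^2 ≤ γ (k T)^2 := wfa_sq_le_sq (hG0 T) hGT
    have h1 : W T * (Gq T)^2 ≤ W T * γ (k T)^2 :=
      mul_le_mul_of_nonneg_left hsq' (le_of_lt (hWpos T))
    have h2 : W T * γ (k T)^2 = L*sT*γ (k T)/2 := by
      simp only [hWdef]
      have hne : (2*γ (k T)) ≠ 0 := ne_of_gt (by linarith only [hγT])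
      rw [div_mul_eq_mul_div, div_eq_div_iff hne (by norm_num : (2:ℝ) ≠ 0)]
      ring
    have h3 : γ (k T) ≤ 2*D*kb := hreach T hT le_rfl
    calc W T * (Gq T)^2 ≤ W T * γ (k T)^2 := h1
      _ = L*sT*γ (k T)/2 := h2
      _ ≤ L*sT*(2*D*kb)/2 := by
          have := mul_le_mul_of_nonneg_left h3 hsT'
          linarith only [this]
      _ = D*L*sT*kb := by ring
  -- ====== put everything together ======
  have hmain : ∑ t ∈ Icc 1 T, (f (x t) - f xstar) ≤ (49/6)*(D*L*sT*kb) := by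
    have h1 : ∑ t ∈ Icc 1 T, (f (x t) - f xstar)
        ≤ ∑ t ∈ J, (W t - W (t+1)) * (ψ 1 - ψ (t+1)) + W T * (ψ 1 - ψ (T+1)) := by
      rw [← hcollapse]
      calc ∑ t ∈ Icc 1 T, (f (x t) - f xstar) ≤ ∑ t ∈ Icc 1 T, W t * (ψ t - ψ (t+1)) := hsum1
        _ = _ := habel
    have h2 : ∑ t ∈ J, (W t - W (t+1)) * (ψ 1 - ψ (t+1))
        ≤ ∑ t ∈ J, (W t * (2*D₁*A t) + W t * (2*D₁*Gq t) + W t * (2*(bb t)*(Gq t))) := by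
      apply Finset.sum_le_sum
      intro t htJ
      have := hperjump t htJ
      linarith only [this]
    have h3 : ∑ t ∈ J, (W t * (2*D₁*A t) + W t * (2*D₁*Gq t) + W t * (2*(bb t)*(Gq t)))
        = ∑ t ∈ J, W t * (2*D₁*A t) + ∑ t ∈ J, W t * (2*D₁*Gq t)
          + ∑ t ∈ J, W t * (2*(bb t)*(Gq t)) := by
      rw [Finset.sum_add_distrib, Finset.sum_add_distrib]
    have hins1 : ∑ t ∈ J', W t * (2*D₁*A t)
        = W T * (2*D₁*A T) + ∑ t ∈ J, W t * (2*D₁*A t) := by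
      rw [hJ'def, Finset.sum_insert hTnotJ]
    have hins2 : ∑ t ∈ J', W t * (2*D₁*Gq t)
        = W T * (2*D₁*Gq T) + ∑ t ∈ J, W t * (2*D₁*Gq t) := by
      rw [hJ'def, Finset.sum_insert hTnotJ]
    calc ∑ t ∈ Icc 1 T, (f (x t) - f xstar)
        ≤ ∑ t ∈ J, (W t - W (t+1)) * (ψ 1 - ψ (t+1)) + W T * (ψ 1 - ψ (T+1)) := h1
      _ ≤ (∑ t ∈ J, W t * (2*D₁*A t) + ∑ t ∈ J, W t * (2*D₁*Gq t)
          + ∑ t ∈ J, W t * (2*(bb t)*(Gq t)))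
          + (W T * (2*D₁*A T) + W T * (2*D₁*Gq T) + W T * (Gq T)^2) := by
          have := le_trans h2 (le_of_eq h3)
          linarith only [this, hlastbd]
      _ = (∑ t ∈ J', W t * (2*D₁*A t)) + (∑ t ∈ J', W t * (2*D₁*Gq t))
          + (∑ t ∈ J, W t * (2*(bb t)*(Gq t))) + W T * (Gq T)^2 := by
          rw [hins1, hins2]
          ring
      _ ≤ 4*(D*L*sT*kb) + (7/6)*(D*L*sT*kb) + 2*(D*L*sT*kb) + D*L*sT*kb := by
          linarith only [hS1, hS2, hS3, hS4]
      _ = (49/6)*(D*L*sT*kb) := by ring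
  -- conclude
  have hkbK : kb ≤ Real.sqrt (2*Real.logb 2 (2*D/γ₀)) := by
    rw [hkbdef]
    apply Real.sqrt_le_sqrt
    linarith only [hkK]
  have hKnn : (0:ℝ) ≤ Real.sqrt (2*Real.logb 2 (2*D/γ₀)) := Real.sqrt_nonneg _
  have hDLsT : (0:ℝ) ≤ D*L*sT := mul_nonneg (mul_nonneg hD0.le hL.le) hsT0.le
  have hfin1 : D*L*sT*kb ≤ D*L*sT*Real.sqrt (2*Real.logb 2 (2*D/γ₀)) :=
    mul_le_mul_of_nonneg_left hkbK hDLsT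
  calc ∑ t ∈ Icc 1 T, (f (x t) - f xstar) ≤ (49/6)*(D*L*sT*kb) := hmain
    _ ≤ (49/6)*(D*L*sT*Real.sqrt (2*Real.logb 2 (2*D/γ₀))) := by
        apply mul_le_mul_of_nonneg_left hfin1 (by norm_num)
    _ ≤ 10*(D*L*sT*Real.sqrt (2*Real.logb 2 (2*D/γ₀))) := by
        apply mul_le_mul_of_nonneg_right (by norm_num) (mul_nonneg hDLsT hKnn)
    _ = 10 * D * L * sT * Real.sqrt (2*Real.logb 2 (2*D/γ₀)) := by ring
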